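/- For all x, x' ∈ E and all y, y' ∈ ℝ^m with y_i ≥ 0 and y'_i ≥ 0 for every i, one has ⟨ Σ_{i=1}^m (y_i ∇g_i(x) − y'_i ∇g_i(x')), x − x' ⟩ − Σ_{i=1}^m (g_i(x) − g_i(x'))(y_i − y'_i) ≥ 0; that is, the saddle operator M(x, y) = (Σ_{i=1}^m y_i ∇g_i(x), (−g_i(x))_{1≤i≤m}) is monotone on E × [0, ∞)^m. -/

import Mathlib

open scoped RealInnerProductSpace

/-- Gradient inequality for a differentiable convex function. -/
lemma grad_ineq_aux
    {E : Type*} [NormedAddCommGroup E] [InnerProductSpace ℝ E]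
    {g : E → ℝ} {g' : E → E}
    (hgrad : ∀ v : E,
      HasFDerivAt g ((InnerProductSpace.toDualMap ℝ E (g' v) : E →L[ℝ] ℝ)) v)
    (hconv : ConvexOn ℝ Set.univ g) (x x' : E) :
    ⟪g' x, x' - x⟫ ≤ g x' - g x := by
  set v := x' - x
  set φ : ℝ → ℝ := fun t => g (x + t • v) with hφ
  have hline : ∀ t : ℝ, HasDerivAt (fun s : ℝ => x + s • v) v t := by
    intro t
    simpa using ((hasDerivAt_id t).smul_const v).const_add x
  have hder : ∀ t : ℝ, HasDerivAt φ ⟪g' (x + t • v), v⟫ t := by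
    intro t
    have := (hgrad (x + t • v)).comp_hasDerivAt t (hline t)
    simp only [InnerProductSpace.toDualMap_apply_apply] at this
    exact this
  have hφconv : ConvexOn ℝ Set.univ φ := by
    have := hconv.comp_affineMap (AffineMap.lineMap x x' : ℝ →ᵃ[ℝ] E)
    have heq : φ = g ∘ (AffineMap.lineMap x x' : ℝ →ᵃ[ℝ] E) := by
      funext t
      simp only [hφ, Function.comp_apply, AffineMap.lineMap_apply_module, v]
      congr 1; module
    rw [heq]
    simpa using this
  have h01 : (0 : ℝ) < 1 := one_pos
  have := hφconv.le_slope_of_hasDerivAt (Set.mem_univ 0) (Set.mem_univ 1) h01 (hder 0)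
  rw [slope_def_field] at this
  simpa [hφ, v] using this

theorem saddle_operator_monotone
    {E : Type*} [NormedAddCommGroup E] [InnerProductSpace ℝ E]
    (m : ℕ) (hm : 0 < m)
    (g : Fin m → E → ℝ) (g' : Fin m → E → E)
    (hgrad : ∀ (i : Fin m) (v : E),
      HasFDerivAt (g i) ((InnerProductSpace.toDualMap ℝ E (g' i v) : E →L[ℝ] ℝ)) v)
    (hconv : ∀ i : Fin m, ConvexOn ℝ Set.univ (g i)) :
    ∀ (x x' : E) (y y' : Fin m → ℝ),
      (∀ i, 0 ≤ y i) → (∀ i, 0 ≤ y' i) →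
      0 ≤ ⟪∑ i, (y i • g' i x - y' i • g' i x'), x - x'⟫
            - ∑ i, (g i x - g i x') * (y i - y' i) := by
  intro x x' y y' hy hy'
  have hA : ∀ i, g i x - g i x' ≤ ⟪g' i x, x - x'⟫ := by
    intro i
    have := grad_ineq_aux (hgrad i) (hconv i) x x'
    have h2 : ⟪g' i x, x' - x⟫ = -⟪g' i x, x - x'⟫ := by
      rw [← inner_neg_right, neg_sub]
    linarith [this, h2.le, h2.ge]
  have hB : ∀ i, ⟪g' i x', x - x'⟫ ≤ g i x - g i x' := by
    intro i
    have := grad_ineq_aux (hgrad i) (hconv i) x' x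
    linarith
  rw [sum_inner, ← Finset.sum_sub_distrib]
  apply Finset.sum_nonneg
  intro i _
  have h1 : ⟪y i • g' i x - y' i • g' i x', x - x'⟫
      = y i * ⟪g' i x, x - x'⟫ - y' i * ⟪g' i x', x - x'⟫ := by
    rw [inner_sub_left, real_inner_smul_left, real_inner_smul_left]
  rw [h1]
  nlinarith [mul_nonneg (hy i) (sub_nonneg.mpr (hA i)),
    mul_nonneg (hy' i) (sub_nonneg.mpr (hB i))]
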